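/- Let T be a tree and e = {u,v} an edge of T. Then the subtree core S_c(T) is contained in V(T_e(u)) if and only if f_{T_e(u)}(u) > f_{T_e(v)}(v). -/

import Mathlib

open SimpleGraph Finset

/-- For an edge `{u,v}` of a tree `G`, the vertex set of the component `T_e(u)` of `G - e`
containing `u`: the vertices strictly closer to `u` than to `v`. -/
def sideOf {V : Type*} (G : SimpleGraph V) (u v : V) : Set V :=
  {w | G.dist w u < G.dist w v}

/-- Number of subtrees of `G` containing `x`. -/
noncomputable def numSubtrees {V : Type*} (G : SimpleGraph V) (x : V) : ℕ :=
  {S : Finset V | x ∈ S ∧ (G.induce (S : Set V)).Connected}.ncard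

/-- Number of subtrees of the subtree of `G` induced on `A` which contain `x`. -/
noncomputable def numSubtreesIn {V : Type*} (G : SimpleGraph V) (A : Set V) (x : V) : ℕ :=
  {S : Finset V | x ∈ S ∧ ↑S ⊆ A ∧ (G.induce (S : Set V)).Connected}.ncard

/-- The subtree core of `G`: the set of vertices contained in the maximum number of subtrees. -/
noncomputable def subtreeCore {V : Type*} (G : SimpleGraph V) : Set V :=
  {v | ∀ u, numSubtrees G u ≤ numSubtrees G v}


section Aux
variable {V : Type*} [Fintype V] [DecidableEq V] {G : SimpleGraph V}

/-- The number of connected `S` with `x ∈ S`, `y ∉ S`. -/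
noncomputable def cntST (G : SimpleGraph V) (x y : V) : ℕ :=
  {S : Finset V | x ∈ S ∧ y ∉ S ∧ (G.induce (S : Set V)).Connected}.ncard

lemma path_length_eq_dist (hT : G.IsTree) {a b : V} {p : G.Walk a b} (hp : p.IsPath) :
    p.length = G.dist a b := by
  obtain ⟨q, hq⟩ := hT.isConnected.exists_walk_length_eq_dist a b
  have hqp : q.bypass = p := (hT.existsUnique_path a b).unique q.bypass_isPath hp
  refine le_antisymm ?_ (G.dist_le p)
  calc p.length = q.bypass.length := by rw [hqp]
    _ ≤ q.length := q.length_bypass_le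
    _ = _ := hq

lemma dist_lt_of_mem_support (hT : G.IsTree) {u v : V} (huv : G.Adj u v) {w : V}
    {p : G.Walk w u} (hp : p.IsPath) (h : v ∈ p.support) :
    G.dist w v < G.dist w u := by
  have ht := hp.takeUntil h
  have hd := hp.dropUntil h
  have hdrop : p.dropUntil v h = Walk.cons huv.symm Walk.nil :=
    (hT.existsUnique_path v u).unique hd (by simp [Walk.cons_isPath_iff, huv.ne'])
  have hlen := congrArg Walk.length (p.take_spec h)
  rw [Walk.length_append, hdrop] at hlen
  have e1 : (p.takeUntil v h).length = G.dist w v := path_length_eq_dist hT ht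
  have e2 : p.length = G.dist w u := path_length_eq_dist hT hp
  simp only [Walk.length_cons, Walk.length_nil] at hlen
  omega

lemma dist_lt_of_not_mem_support (hT : G.IsTree) {u v : V} (huv : G.Adj u v) {w : V}
    {p : G.Walk w u} (hp : p.IsPath) (h : v ∉ p.support) :
    G.dist w u < G.dist w v := by
  have hc : (p.concat huv).IsPath := by
    rw [← Walk.isPath_reverse_iff, Walk.reverse_concat]
    rw [Walk.cons_isPath_iff]
    refine ⟨hp.reverse, ?_⟩
    simpa [Walk.support_reverse] using h
  have e1 : (p.concat huv).length = G.dist w v := path_length_eq_dist hT hc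
  have e2 : p.length = G.dist w u := path_length_eq_dist hT hp
  rw [Walk.length_concat] at e1
  omega

lemma support_subset_of_connected (hT : G.IsTree) {S : Finset V}
    (hconn : (G.induce (S : Set V)).Connected) {x y : V} (hx : x ∈ S) (hy : y ∈ S)
    {p : G.Walk x y} (hp : p.IsPath) : ∀ z ∈ p.support, z ∈ S := by
  obtain ⟨q⟩ := hconn ⟨x, by simpa using hx⟩ ⟨y, by simpa using hy⟩
  let q' : G.Walk x y := q.map (SimpleGraph.Embedding.induce (S : Set V)).toHom
  have hsub : ∀ z ∈ q'.support, z ∈ S := by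
    intro z hz
    have hz : z ∈ (q.map (SimpleGraph.Embedding.induce (S : Set V)).toHom).support := hz
    rw [Walk.support_map] at hz
    obtain ⟨⟨z', hz'⟩, _, rfl⟩ := List.mem_map.mp hz
    simpa using hz'
  have hbp : q'.bypass = p := (hT.existsUnique_path x y).unique q'.bypass_isPath hp
  intro z hz
  exact hsub z (q'.support_bypass_subset (hbp ▸ hz))

lemma induce_singleton_connected (G : SimpleGraph V) (y : V) :
    (G.induce ({y} : Set V)).Connected := by
  haveI : Nonempty ({y} : Set V) := ⟨⟨y, rfl⟩⟩
  refine ⟨fun a b => ?_⟩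
  have : a = b := Subtype.ext (a.2.trans b.2.symm)
  exact this ▸ Reachable.refl a

lemma connected_insert {S : Finset V} (hconn : (G.induce (S : Set V)).Connected)
    {x y : V} (hx : x ∈ S) (hxy : G.Adj x y) :
    (G.induce ((insert y S : Finset V) : Set V)).Connected := by
  have hset : ((insert y S : Finset V) : Set V) = ({x, y} : Set V) ∪ (S : Set V) := by
    ext z
    simp only [Finset.coe_insert, Set.mem_insert_iff, Finset.mem_coe, Set.mem_union,
      Set.mem_singleton_iff]
    constructor
    · rintro (rfl | h)
      · exact Or.inl (Or.inr rfl)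
      · exact Or.inr h
    · rintro ((rfl | rfl) | h)
      · exact Or.inr hx
      · exact Or.inl rfl
      · exact Or.inr h
  rw [hset]
  exact induce_union_connected (induce_pair_connected_of_adj hxy).preconnected hconn.preconnected
    ⟨x, Or.inl rfl, Finset.mem_coe.mpr hx⟩

lemma key_split (G : SimpleGraph V) (x y : V) :
    numSubtrees G x + cntST G y x = numSubtrees G y + cntST G x y := by
  have split : ∀ a b : V, numSubtrees G a =
      {S : Finset V | a ∈ S ∧ b ∈ S ∧ (G.induce (S : Set V)).Connected}.ncard + cntST G a b := by
    intro a b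
    have hdisj : Disjoint
        {S : Finset V | a ∈ S ∧ b ∈ S ∧ (G.induce (S : Set V)).Connected}
        {S : Finset V | a ∈ S ∧ b ∉ S ∧ (G.induce (S : Set V)).Connected} := by
      rw [Set.disjoint_left]
      rintro S ⟨-, h, -⟩ ⟨-, h', -⟩
      exact h' h
    have hu : {S : Finset V | a ∈ S ∧ (G.induce (S : Set V)).Connected} =
        {S : Finset V | a ∈ S ∧ b ∈ S ∧ (G.induce (S : Set V)).Connected} ∪
        {S : Finset V | a ∈ S ∧ b ∉ S ∧ (G.induce (S : Set V)).Connected} := by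
      ext S
      simp only [Set.mem_setOf_eq, Set.mem_union]
      by_cases hb : b ∈ S <;> tauto
    rw [numSubtrees, cntST, hu, Set.ncard_union_eq hdisj (Set.toFinite _) (Set.toFinite _)]
  have hsym : {S : Finset V | x ∈ S ∧ y ∈ S ∧ (G.induce (S : Set V)).Connected} =
      {S : Finset V | y ∈ S ∧ x ∈ S ∧ (G.induce (S : Set V)).Connected} := by
    ext S; simp only [Set.mem_setOf_eq]; tauto
  rw [split x y, split y x, hsym]
  omega

lemma cnt_mono (hT : G.IsTree) {x y z : V} (hxy : G.Adj x y) (hyz : G.Adj y z)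
    (hxz : x ≠ z) : cntST G x y + 1 ≤ cntST G y z := by
  set T0 : Set (Finset V) :=
    {S : Finset V | y ∈ S ∧ z ∉ S ∧ (G.induce (S : Set V)).Connected} with hT0
  have hy0 : ({y} : Finset V) ∈ T0 := by
    refine ⟨Finset.mem_singleton_self y, ?_, ?_⟩
    · simp [Finset.mem_singleton, hyz.ne']
    · rw [Finset.coe_singleton]
      exact induce_singleton_connected G y
  have hmaps : ∀ S ∈ {S : Finset V | x ∈ S ∧ y ∉ S ∧ (G.induce (S : Set V)).Connected},
      insert y S ∈ T0 \ {({y} : Finset V)} := by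
    rintro S ⟨hxS, hyS, hSconn⟩
    have hzS : z ∉ S := by
      intro hzS
      -- the unique path from x to z is x-y-z, so y ∈ S, contradiction
      have hpath : (Walk.cons hxy (Walk.cons hyz Walk.nil) : G.Walk x z).IsPath := by
        simp [Walk.cons_isPath_iff, hxz, hxy.ne, hyz.ne]
      have := support_subset_of_connected hT hSconn hxS hzS hpath y (by simp)
      exact hyS this
    refine ⟨⟨Finset.mem_insert_self y S, ?_, connected_insert hSconn hxS hxy⟩, ?_⟩
    · simp only [Finset.mem_insert]
      rintro (rfl | h)
      · exact hyz.ne rfl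
      · exact hzS h
    · intro hEq
      simp only [Set.mem_singleton_iff] at hEq
      have hx' : x ∈ insert y S := Finset.mem_insert_of_mem hxS
      rw [hEq] at hx'
      exact hxy.ne (Finset.mem_singleton.mp hx')
  have hinj : Set.InjOn (fun S => insert y S)
      {S : Finset V | x ∈ S ∧ y ∉ S ∧ (G.induce (S : Set V)).Connected} := by
    rintro S ⟨-, hyS, -⟩ S' ⟨-, hyS', -⟩ hEq
    have hEq' : insert y S = insert y S' := hEq
    have : (insert y S).erase y = (insert y S').erase y := by rw [hEq']
    rwa [Finset.erase_insert hyS, Finset.erase_insert hyS'] at this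
  have h1 : cntST G x y ≤ (T0 \ {({y} : Finset V)}).ncard :=
    Set.ncard_le_ncard_of_injOn _ hmaps hinj (Set.toFinite _)
  have h2 : (T0 \ {({y} : Finset V)}).ncard + 1 = T0.ncard :=
    Set.ncard_diff_singleton_add_one hy0 (Set.toFinite _)
  have h3 : cntST G y z = T0.ncard := rfl
  omega

lemma main_lt (hT : G.IsTree) : ∀ {y w : V} (p : G.Walk y w) {x : V} (hxy : G.Adj x y),
    (p.cons hxy).IsPath → ∀ a b : ℕ, a ≤ cntST G x y → cntST G y x ≤ b → b < a →
      numSubtrees G w < numSubtrees G x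
  | y, _, Walk.nil, x, hxy, hp, a, b, h1, h2, hab => by
      have hk := key_split G x y
      omega
  | y, w, Walk.cons h q, x, hxy, hp, a, b, h1, h2, hab => by
      rename_i s
      have hxz : x ≠ s := by
        rw [Walk.cons_isPath_iff] at hp
        intro hEq
        apply hp.2
        rw [hEq, Walk.support_cons]
        exact List.mem_cons_of_mem _ q.start_mem_support
      have m1 : cntST G x y + 1 ≤ cntST G y s := cnt_mono hT hxy h hxz
      have m2 : cntST G s y + 1 ≤ cntST G y x := cnt_mono hT h.symm hxy.symm (Ne.symm hxz)
      have hfy : numSubtrees G w < numSubtrees G y :=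
        main_lt hT q h hp.of_cons (cntST G y s) (cntST G s y) le_rfl le_rfl (by omega)
      have hk := key_split G x y
      omega
  termination_by y w p => p.length

lemma exists_cons_path (hT : G.IsTree) {a b w : V} (hab : G.Adj a b) {P : G.Walk w a}
    (hP : P.IsPath) (hb : b ∈ P.support) :
    ∃ p : G.Walk b w, (p.cons hab).IsPath := by
  have hbR : b ∈ P.reverse.support := by rwa [Walk.support_reverse, List.mem_reverse]
  have hRpath : P.reverse.IsPath := hP.reverse
  have htake : P.reverse.takeUntil b hbR = Walk.cons hab Walk.nil :=
    (hT.existsUnique_path a b).unique (hRpath.takeUntil hbR) (by simp [Walk.cons_isPath_iff, hab.ne])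
  refine ⟨P.reverse.dropUntil b hbR, ?_⟩
  have hspec := P.reverse.take_spec hbR
  rw [htake] at hspec
  simp only [Walk.cons_append, Walk.nil_append] at hspec
  rw [hspec]
  exact hRpath

lemma numSubtreesIn_eq_cnt (hT : G.IsTree) {u v : V} (huv : G.Adj u v) :
    numSubtreesIn G (sideOf G u v) u = cntST G u v := by
  rw [numSubtreesIn, cntST]
  congr 1
  ext S
  simp only [Set.mem_setOf_eq]
  constructor
  · rintro ⟨h1, h2, h3⟩
    refine ⟨h1, fun hv => ?_, h3⟩
    have hmem : v ∈ sideOf G u v := h2 (Finset.mem_coe.mpr hv)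
    simp only [sideOf, Set.mem_setOf_eq] at hmem
    rw [G.dist_self] at hmem
    omega
  · rintro ⟨h1, h2, h3⟩
    refine ⟨h1, fun s hs => ?_, h3⟩
    have hsS : s ∈ S := hs
    obtain ⟨P, hP, -⟩ := hT.existsUnique_path s u
    have hvP : v ∉ P.support := fun hv => h2 (support_subset_of_connected hT h3 hsS h1 hP v hv)
    exact dist_lt_of_not_mem_support hT huv hP hvP

end Aux

/-- Let `e = {u,v}` be an edge of a tree `T`. Then the subtree core `S_c(T)` is contained in
`V(T_e(u))` if and only if `f_{T_e(u)}(u) > f_{T_e(v)}(v)`. -/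
theorem subtreeCore_side_iff {V : Type*} [Fintype V] (G : SimpleGraph V)
    (hT : G.IsTree) {u v : V} (huv : G.Adj u v) :
    subtreeCore G ⊆ sideOf G u v ↔
      numSubtreesIn G (sideOf G v u) v < numSubtreesIn G (sideOf G u v) u := by
  classical
  rw [numSubtreesIn_eq_cnt hT huv, numSubtreesIn_eq_cnt hT huv.symm]
  constructor
  · intro hcore
    by_contra hle
    push_neg at hle   -- cntST G u v ≤ cntST G v u
    haveI : Nonempty V := ⟨u⟩
    obtain ⟨w0, hw0⟩ := Finite.exists_max (numSubtrees G)
    have hw0core : w0 ∈ subtreeCore G := hw0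
    have hA : G.dist w0 u < G.dist w0 v := hcore hw0core
    by_cases hwu : w0 = u
    · subst hwu
      have hfuv : numSubtrees G w0 ≤ numSubtrees G v := by
        have hk := key_split G w0 v
        omega
      have hvcore : v ∈ subtreeCore G := fun w => le_trans (hw0 w) hfuv
      have := hcore hvcore
      simp only [sideOf, Set.mem_setOf_eq, G.dist_self] at this
      omega
    · obtain ⟨P, hP, -⟩ := hT.existsUnique_path w0 v
      have huP : u ∈ P.support := by
        by_contra huP
        have := dist_lt_of_not_mem_support hT huv.symm hP huP
        omega
      obtain ⟨p', hp'⟩ := exists_cons_path hT huv.symm hP huP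
      cases p' with
      | nil => exact hwu rfl
      | @cons _ z _ huz q =>
        have hvz : v ≠ z := by
          rw [Walk.cons_isPath_iff] at hp'
          intro hEq
          apply hp'.2
          rw [hEq, Walk.support_cons]
          exact List.mem_cons_of_mem _ q.start_mem_support
        have m1 : cntST G v u + 1 ≤ cntST G u z := cnt_mono hT huv.symm huz hvz
        have m2 : cntST G z u + 1 ≤ cntST G u v := cnt_mono hT huz.symm huv (Ne.symm hvz)
        have := main_lt hT q huz hp'.of_cons (cntST G u z) (cntST G z u) le_rfl le_rfl
          (by omega)
        have := hw0 u
        omega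
  · intro h w hw
    obtain ⟨P, hP, -⟩ := hT.existsUnique_path w u
    by_contra hcon
    simp only [sideOf, Set.mem_setOf_eq, not_lt] at hcon
    have hvP : v ∈ P.support := by
      by_contra hvP
      have := dist_lt_of_not_mem_support hT huv hP hvP
      omega
    obtain ⟨p, hp⟩ := exists_cons_path hT huv hP hvP
    have := main_lt hT p huv hp (cntST G u v) (cntST G v u) le_rfl le_rfl h
    have := hw u
    omega
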